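/- Suppose f : ℝⁿ → ℝ is continuous, S_F := {x : f(x) ≤ 0} is nonempty, and there exist c > 0, R > 0 such that the limiting-subdifferential slope satisfies 𝔪_f(x) ≥ c for all x with f(x) > 0 and ‖x‖ ≥ R. Fix s ∈ S_F. Then (c/2)·dist(x, S_F) ≤ [f(x)]₊ for all x with ‖x‖ ≥ 3R + 2‖s‖. -/

import Mathlib

open Metric Set Filter Topology
open scoped ENNReal NNReal

/-- The Fréchet subdifferential of `f` at `x`:
`v ∈ ∂̂f(x)` iff `liminf_{h → 0} (f(x+h) − f(x) − ⟨v, h⟩)/‖h‖ ≥ 0`. -/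
def frechetSubdiff {n : ℕ} (f : EuclideanSpace ℝ (Fin n) → ℝ)
    (x : EuclideanSpace ℝ (Fin n)) : Set (EuclideanSpace ℝ (Fin n)) :=
  {v | ∀ ε > (0 : ℝ), ∀ᶠ h in 𝓝 (0 : EuclideanSpace ℝ (Fin n)),
      f (x + h) - f x - (inner ℝ v h : ℝ) ≥ -ε * ‖h‖}

/-- The limiting (Mordukhovich) subdifferential of `f` at `x`. -/
def limitingSubdiff {n : ℕ} (f : EuclideanSpace ℝ (Fin n) → ℝ)
    (x : EuclideanSpace ℝ (Fin n)) : Set (EuclideanSpace ℝ (Fin n)) :=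
  {v | ∃ xs vs : ℕ → EuclideanSpace ℝ (Fin n),
      (∀ k, vs k ∈ frechetSubdiff f (xs k)) ∧
      Tendsto xs atTop (𝓝 x) ∧
      Tendsto (fun k => f (xs k)) atTop (𝓝 (f x)) ∧
      Tendsto vs atTop (𝓝 v)}

/-- The nonsmooth slope `𝔪_f(x) := inf{‖w‖ : w ∈ ∂f(x)}`, with value `+∞` when
`∂f(x) = ∅`. -/
noncomputable def nonsmoothSlope {n : ℕ} (f : EuclideanSpace ℝ (Fin n) → ℝ)
    (x : EuclideanSpace ℝ (Fin n)) : ℝ≥0∞ :=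
  ⨅ v ∈ limitingSubdiff f x, (‖v‖₊ : ℝ≥0∞)

lemma psi_upper {n : ℕ} (a h : EuclideanSpace ℝ (Fin n)) (δ K : ℝ)
    (hδ : 0 < δ) (hK : 0 < K) :
    K * Real.sqrt (‖a + h‖^2 + δ^2) ≤ K * Real.sqrt (‖a‖^2 + δ^2)
      + (K / Real.sqrt (‖a‖^2 + δ^2)) * (inner ℝ a h : ℝ) + (K/(2*δ)) * ‖h‖^2 := by
  set s := Real.sqrt (‖a‖^2 + δ^2) with hs
  set t := Real.sqrt (‖a + h‖^2 + δ^2) with hts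
  have hs2 : s^2 = ‖a‖^2 + δ^2 := Real.sq_sqrt (by positivity)
  have ht2 : t^2 = ‖a + h‖^2 + δ^2 := Real.sq_sqrt (by positivity)
  have hsδ : δ ≤ s := by
    have : Real.sqrt (δ^2) ≤ s := Real.sqrt_le_sqrt (by nlinarith [sq_nonneg ‖a‖])
    rwa [Real.sqrt_sq hδ.le] at this
  have hspos : 0 < s := lt_of_lt_of_le hδ hsδ
  have htpos : 0 ≤ t := Real.sqrt_nonneg _
  have hexp : ‖a + h‖^2 = ‖a‖^2 + 2 * (inner ℝ a h : ℝ) + ‖h‖^2 := norm_add_sq_real a h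
  set X : ℝ := 2 * (inner ℝ a h : ℝ) + ‖h‖^2 with hX
  have ht2' : t^2 = s^2 + X := by rw [ht2, hs2, hexp, hX]; ring
  have key2 : (t - s) * (2*s) ≤ X := by nlinarith [sq_nonneg (t - s)]
  have key' : t ≤ s + X / (2*s) := by
    rw [← sub_le_iff_le_add', le_div_iff₀ (by positivity)]
    exact key2
  have hmul := mul_le_mul_of_nonneg_left key' hK.le
  have heq : K * (s + X/(2*s)) = K*s + (K/s) * (inner ℝ a h : ℝ) + (K/(2*s)) * ‖h‖^2 := by
    rw [hX]; field_simp; ring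
  rw [heq] at hmul
  have hlast : (K/(2*s)) * ‖h‖^2 ≤ (K/(2*δ)) * ‖h‖^2 := by
    apply mul_le_mul_of_nonneg_right _ (sq_nonneg _)
    apply div_le_div_of_nonneg_left hK.le (by positivity) (by linarith)
  linarith

lemma norm_le_sqrt_aux (x δ : ℝ) (hx : 0 ≤ x) : x ≤ Real.sqrt (x^2 + δ^2) := by
  have : Real.sqrt (x^2) ≤ Real.sqrt (x^2 + δ^2) := Real.sqrt_le_sqrt (by nlinarith)
  rwa [Real.sqrt_sq hx] at this

/-- If `f z ≥ f y - κ‖z - y‖` on a ball around `y`, the limiting subdifferential at `y`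
contains an element of norm `≤ K` for any `K > κ`. -/
lemma exists_small_limiting_subgrad {n : ℕ} (f : EuclideanSpace ℝ (Fin n) → ℝ)
    (hcont : Continuous f) (y : EuclideanSpace ℝ (Fin n)) (κ K r : ℝ)
    (hκ : 0 ≤ κ) (hκK : κ < K) (hr : 0 < r)
    (hdec : ∀ z : EuclideanSpace ℝ (Fin n), ‖z - y‖ ≤ r → f y - κ * ‖z - y‖ ≤ f z) :
    ∃ v ∈ limitingSubdiff f y, ‖v‖ ≤ K := by
  have hK : 0 < K := lt_of_le_of_lt hκ hκK
  have hKκ : 0 < K - κ := by linarith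
  set d0 : ℝ := r * (K - κ) / (2 * K) with hd0def
  have hd0 : 0 < d0 := by positivity
  set δ : ℕ → ℝ := fun k => d0 / (k + 1) with hδdef
  have hδpos : ∀ k, 0 < δ k := fun k => by positivity
  have hδle : ∀ k, δ k ≤ d0 := fun k => by
    apply div_le_self hd0.le
    have : (0:ℝ) ≤ (k:ℝ) := Nat.cast_nonneg k
    linarith
  have hδto : Tendsto δ atTop (𝓝 0) := by
    have := tendsto_one_div_add_atTop_nhds_zero_nat.const_mul d0
    simpa [hδdef, div_eq_mul_inv, mul_comm] using this
  -- minimize the penalized function over the closed ball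
  have hmin : ∀ k : ℕ, ∃ p ∈ closedBall y r,
      ∀ z ∈ closedBall y r,
        f p + K * Real.sqrt (‖p - y‖^2 + (δ k)^2) ≤
        f z + K * Real.sqrt (‖z - y‖^2 + (δ k)^2) := by
    intro k
    have hcomp : IsCompact (closedBall y r) := isCompact_closedBall y r
    have hc' : Continuous (fun z : EuclideanSpace ℝ (Fin n) =>
        f z + K * Real.sqrt (‖z - y‖^2 + (δ k)^2)) :=
      hcont.add (continuous_const.mul (Real.continuous_sqrt.comp
        ((((continuous_id.sub continuous_const).norm.pow 2).add continuous_const))))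
    obtain ⟨p, hp, hpmin⟩ := hcomp.exists_isMinOn ⟨y, mem_closedBall_self hr.le⟩
      hc'.continuousOn
    exact ⟨p, hp, fun z hz => hpmin hz⟩
  choose p hpball hpmin using hmin
  -- distance estimate
  have hdist : ∀ k, ‖p k - y‖ ≤ K * δ k / (K - κ) := by
    intro k
    have h1 := hpmin k y (mem_closedBall_self hr.le)
    rw [sub_self, norm_zero] at h1
    rw [show (0:ℝ)^2 + (δ k)^2 = (δ k)^2 by ring, Real.sqrt_sq (hδpos k).le] at h1
    have h2 : f y - κ * ‖p k - y‖ ≤ f (p k) := by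
      apply hdec
      have := hpball k
      rwa [mem_closedBall, dist_eq_norm] at this
    have h3 : K * ‖p k - y‖ ≤ K * Real.sqrt (‖p k - y‖^2 + (δ k)^2) :=
      mul_le_mul_of_nonneg_left (norm_le_sqrt_aux _ _ (norm_nonneg _)) hK.le
    rw [le_div_iff₀ hKκ]
    nlinarith
  have hdist2 : ∀ k, ‖p k - y‖ ≤ r / 2 := by
    intro k
    calc ‖p k - y‖ ≤ K * δ k / (K - κ) := hdist k
    _ ≤ K * d0 / (K - κ) := by gcongr; exact hδle k
    _ = r / 2 := by rw [hd0def]; field_simp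
  -- the candidate subgradients
  set sk : ℕ → ℝ := fun k => Real.sqrt (‖p k - y‖^2 + (δ k)^2) with hskdef
  have hskpos : ∀ k, 0 < sk k := fun k => Real.sqrt_pos.mpr (by positivity)
  have hska : ∀ k, ‖p k - y‖ ≤ sk k := fun k => norm_le_sqrt_aux _ _ (norm_nonneg _)
  set v : ℕ → EuclideanSpace ℝ (Fin n) := fun k => -((K / sk k) • (p k - y)) with hvdef
  have hvnorm : ∀ k, ‖v k‖ ≤ K := by
    intro k
    rw [hvdef]
    simp only [norm_neg, norm_smul, Real.norm_eq_abs]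
    rw [abs_of_pos (by positivity : 0 < K / sk k)]
    rw [div_mul_eq_mul_div, div_le_iff₀ (hskpos k)]
    exact mul_le_mul_of_nonneg_left (hska k) hK.le
  -- Fréchet subgradient property
  have hfrech : ∀ k, v k ∈ frechetSubdiff f (p k) := by
    intro k ε hε
    have hball : closedBall (0 : EuclideanSpace ℝ (Fin n)) (min (r/2) (2 * δ k * ε / K))
        ∈ 𝓝 (0 : EuclideanSpace ℝ (Fin n)) :=
      closedBall_mem_nhds _ (by positivity)
    filter_upwards [hball] with h hh
    rw [mem_closedBall, dist_zero_right] at hh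
    have hh1 : ‖h‖ ≤ r/2 := le_trans hh (min_le_left _ _)
    have hh2 : ‖h‖ ≤ 2 * δ k * ε / K := le_trans hh (min_le_right _ _)
    -- p k + h is in the ball
    have hzball : p k + h ∈ closedBall y r := by
      rw [mem_closedBall, dist_eq_norm]
      have : p k + h - y = (p k - y) + h := by abel
      rw [this]
      calc ‖(p k - y) + h‖ ≤ ‖p k - y‖ + ‖h‖ := norm_add_le _ _
      _ ≤ r/2 + r/2 := add_le_add (hdist2 k) hh1
      _ = r := by ring
    have hmin2 := hpmin k _ hzball
    have hrw : p k + h - y = (p k - y) + h := by abel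
    rw [hrw] at hmin2
    have hpsi := psi_upper (p k - y) h (δ k) K (hδpos k) hK
    have hskk : Real.sqrt (‖p k - y‖^2 + (δ k)^2) = sk k := rfl
    rw [hskk] at hpsi hmin2
    -- inner product computation
    have hinner : (inner ℝ (v k) h : ℝ) = -((K / sk k) * (inner ℝ (p k - y) h : ℝ)) := by
      rw [hvdef]
      simp [inner_smul_left, inner_neg_left]
    rw [ge_iff_le, hinner]
    have hlast : (K/(2 * δ k)) * ‖h‖^2 ≤ ε * ‖h‖ := by
      rw [pow_two, ← mul_assoc]
      apply mul_le_mul_of_nonneg_right _ (norm_nonneg h)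
      rw [div_mul_eq_mul_div, div_le_iff₀ (by positivity : (0:ℝ) < 2 * δ k)]
      calc K * ‖h‖ ≤ K * (2 * δ k * ε / K) := mul_le_mul_of_nonneg_left hh2 hK.le
      _ = ε * (2 * δ k) := by field_simp
    -- combine
    have : f (p k) + K * sk k ≤ f (p k + h) + K * Real.sqrt (‖(p k - y) + h‖^2 + (δ k)^2) :=
      hmin2
    nlinarith [hpsi, this, hlast]
  -- convergence of p k to y
  have hptend : Tendsto p atTop (𝓝 y) := by
    rw [tendsto_iff_norm_sub_tendsto_zero]
    apply squeeze_zero (fun k => norm_nonneg _) hdist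
    have : Tendsto (fun k => K * δ k / (K - κ)) atTop (𝓝 (K * 0 / (K - κ))) := by
      apply Tendsto.div_const
      exact hδto.const_mul K
    simpa using this
  -- extract convergent subsequence of v
  have hvmem : ∀ k, v k ∈ closedBall (0 : EuclideanSpace ℝ (Fin n)) K := by
    intro k
    rw [mem_closedBall, dist_zero_right]
    exact hvnorm k
  obtain ⟨w, hwK, φ, hφ, hvw⟩ :=
    (isCompact_closedBall (0 : EuclideanSpace ℝ (Fin n)) K).tendsto_subseq hvmem
  refine ⟨w, ⟨p ∘ φ, v ∘ φ, fun k => hfrech (φ k), ?_, ?_, hvw⟩, ?_⟩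
  · exact hptend.comp hφ.tendsto_atTop
  · exact ((hcont.tendsto y).comp hptend).comp hφ.tendsto_atTop
  · rw [mem_closedBall, dist_zero_right] at hwK
    exact hwK

/-- if the slope of `f` is bounded below by `c > 0` outside the ball of radius
`R` on the set `{f > 0}`, then `(c/2)·dist(x, S_F) ≤ [f(x)]₊` for `‖x‖ ≥ 3R + 2‖s‖`, where
`s ∈ S_F := {f ≤ 0}`. -/
theorem global_error_bound_from_slope {n : ℕ}
    (f : EuclideanSpace ℝ (Fin n) → ℝ)
    (hcont : Continuous f) (hLip : LocallyLipschitz f)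
    (c R : ℝ) (hc : 0 < c) (hR : 0 < R)
    (hslope : ∀ x : EuclideanSpace ℝ (Fin n), 0 < f x → R ≤ ‖x‖ →
      ENNReal.ofReal c ≤ nonsmoothSlope f x)
    (s : EuclideanSpace ℝ (Fin n)) (hs : f s ≤ 0) :
    ∀ x : EuclideanSpace ℝ (Fin n), 3 * R + 2 * ‖s‖ ≤ ‖x‖ →
      c / 2 * Metric.infDist x {y : EuclideanSpace ℝ (Fin n) | f y ≤ 0} ≤ max (f x) 0 := by
  intro x hx
  set S := {y : EuclideanSpace ℝ (Fin n) | f y ≤ 0} with hSdef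
  by_cases hfx : f x ≤ 0
  · rw [infDist_zero_of_mem (show x ∈ S from hfx), mul_zero]
    exact le_max_right _ _
  push_neg at hfx
  rw [max_eq_left hfx.le]
  by_contra hcon
  push_neg at hcon
  set d := Metric.infDist x S with hddef
  have hd0 : 0 ≤ d := infDist_nonneg
  have hdpos : 0 < d := by nlinarith
  have hdle : d ≤ ‖x‖ + ‖s‖ := by
    calc d ≤ dist x s := infDist_le_dist_of_mem (show s ∈ S from hs)
    _ = ‖x - s‖ := dist_eq_norm x s
    _ ≤ ‖x‖ + ‖s‖ := norm_sub_le x s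
  set σ := 2 * f x / d with hσdef
  have hσpos : 0 < σ := by positivity
  have hσc : σ < c := by rw [hσdef, div_lt_iff₀ hdpos]; nlinarith
  set g := fun z : EuclideanSpace ℝ (Fin n) => max (f z) 0 with hgdef
  have hgc : Continuous g := hcont.max continuous_const
  have hgnn : ∀ z, 0 ≤ g z := fun z => le_max_right _ _
  have hcomp : IsCompact (closedBall x (d/2+1)) := isCompact_closedBall x (d/2+1)
  obtain ⟨y, hyB, hymin⟩ := hcomp.exists_isMinOn
    ⟨x, mem_closedBall_self (by positivity)⟩
    ((hgc.add (continuous_const.mul (continuous_id.sub continuous_const).norm)).continuousOn :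
      ContinuousOn (fun z => g z + σ * ‖z - x‖) (closedBall x (d/2+1)))
  have hymin' : ∀ z ∈ closedBall x (d/2+1), g y + σ * ‖y - x‖ ≤ g z + σ * ‖z - x‖ :=
    fun z hz => hymin hz
  have h0 := hymin' x (mem_closedBall_self (by positivity))
  rw [sub_self, norm_zero, mul_zero, add_zero] at h0
  have hgx : g x = f x := max_eq_left hfx.le
  rw [hgx] at h0
  have hyx : ‖y - x‖ ≤ d/2 := by
    have h1 : σ * ‖y - x‖ ≤ f x := by linarith [hgnn y]
    rw [hσdef, div_mul_eq_mul_div, div_le_iff₀ hdpos] at h1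
    nlinarith
  have hfy : 0 < f y := by
    by_contra hfy
    push_neg at hfy
    have h2 : d ≤ dist x y := infDist_le_dist_of_mem (show y ∈ S from hfy)
    rw [dist_eq_norm, norm_sub_rev] at h2
    linarith
  have hyR : R ≤ ‖y‖ := by
    have h1 : ‖x‖ ≤ ‖y‖ + ‖y - x‖ := by
      have h2 := norm_add_le y (x - y)
      rw [show y + (x - y) = x from by abel, norm_sub_rev x y] at h2
      exact h2
    have hsnn : (0:ℝ) ≤ ‖s‖ := norm_nonneg s
    linarith
  -- `f > 0` on a small ball around `y`
  have hopen : ∃ r1 > 0, ∀ z : EuclideanSpace ℝ (Fin n), ‖z - y‖ ≤ r1 → 0 < f z := by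
    have hnhds : {z : EuclideanSpace ℝ (Fin n) | 0 < f z} ∈ 𝓝 y :=
      (isOpen_lt continuous_const hcont).mem_nhds hfy
    obtain ⟨ρ, hρ, hsub⟩ := Metric.mem_nhds_iff.mp hnhds
    exact ⟨ρ/2, by positivity, fun z hz =>
      hsub (by rw [mem_ball, dist_eq_norm]; linarith)⟩
  obtain ⟨r1, hr1, hfpos⟩ := hopen
  set r := min r1 1 with hrdef
  have hrpos : 0 < r := lt_min hr1 one_pos
  have hdec : ∀ z : EuclideanSpace ℝ (Fin n), ‖z - y‖ ≤ r → f y - σ * ‖z - y‖ ≤ f z := by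
    intro z hz
    have hz1 : ‖z - y‖ ≤ r1 := le_trans hz (min_le_left _ _)
    have hz2 : ‖z - y‖ ≤ 1 := le_trans hz (min_le_right _ _)
    have htri : ‖z - x‖ ≤ ‖z - y‖ + ‖y - x‖ := by
      have := norm_add_le (z - y) (y - x)
      rwa [show z - y + (y - x) = z - x from by abel] at this
    have hzB : z ∈ closedBall x (d/2+1) := by
      rw [mem_closedBall, dist_eq_norm]
      linarith
    have hm := hymin' z hzB
    have hgz : g z = f z := max_eq_left (hfpos z hz1).le
    have hgy : g y = f y := max_eq_left hfy.le
    rw [hgz, hgy] at hm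
    have htri2 : σ * ‖z - x‖ ≤ σ * ‖z - y‖ + σ * ‖y - x‖ := by nlinarith
    linarith
  obtain ⟨v, hvmem, hvK⟩ := exists_small_limiting_subgrad f hcont y σ ((σ+c)/2) r
    hσpos.le (by linarith) hrpos hdec
  have hslope' := hslope y hfy hyR
  have hle : nonsmoothSlope f y ≤ (‖v‖₊ : ℝ≥0∞) := by
    apply iInf₂_le v hvmem
  have hcv : ENNReal.ofReal c ≤ (‖v‖₊ : ℝ≥0∞) := le_trans hslope' hle
  rw [← ENNReal.ofReal_coe_nnreal, coe_nnnorm, ENNReal.ofReal_le_ofReal_iff (norm_nonneg v)] at hcv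
  linarith
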